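/- Suppose 0 < C₁ < C₂ < K and F(1) < (1 − C₂/K) * exp(λ). Let p₁ be the unique solution in (0,1) of F(p) = (1 − C₁/K) * exp(λ p) and let p₂ be the unique solution in (0,1) of F(p) = (1 − C₂/K) * exp(λ p). Then p₁ < p₂ (the equilibrium probability of not protecting is strictly increasing in the protection cost C). -/

import Mathlib

namespace VirusAux

variable {T : ℕ}

noncomputable def cc (lam : ℝ) (r : Fin T → ℝ) (x : Fin T → ℕ) : ℝ :=
  ∏ t, (lam * r t) ^ (x t) / (Nat.factorial (x t) : ℝ)

def nn (x : Fin T → ℕ) : ℕ := ∑ t, x t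

lemma cc_pos {lam : ℝ} {r : Fin T → ℝ} (hlam : 0 < lam) (hr : ∀ t, 0 < r t)
    (x : Fin T → ℕ) : 0 < cc lam r x :=
  Finset.prod_pos fun t _ => div_pos (pow_pos (mul_pos hlam (hr t)) _)
    (Nat.cast_pos.2 (Nat.factorial_pos _))

lemma nn_add_single (y : Fin T → ℕ) (t : Fin T) :
    nn (y + Pi.single t 1) = nn y + 1 := by
  simp [nn, Finset.sum_add_distrib, Fintype.sum_pi_single']

lemma cc_add_single (lam : ℝ) (r : Fin T → ℝ) (y : Fin T → ℕ) (t : Fin T) :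
    ((y t : ℝ) + 1) * cc lam r (y + Pi.single t 1) = lam * r t * cc lam r y := by
  set z : Fin T → ℕ := y + Pi.single t 1 with hz
  unfold cc
  rw [Finset.prod_eq_mul_prod_sdiff_singleton_of_mem (Finset.mem_univ t)
      (fun u => (lam * r u) ^ (z u) / (Nat.factorial (z u) : ℝ)),
    Finset.prod_eq_mul_prod_sdiff_singleton_of_mem (Finset.mem_univ t)
      (fun u => (lam * r u) ^ (y u) / (Nat.factorial (y u) : ℝ))]
  have hprod : ∏ u ∈ Finset.univ \ {t}, (lam * r u) ^ (z u) / (Nat.factorial (z u) : ℝ)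
      = ∏ u ∈ Finset.univ \ {t}, (lam * r u) ^ (y u) / (Nat.factorial (y u) : ℝ) := by
    apply Finset.prod_congr rfl
    intro u hu
    have hut : u ≠ t := by simpa using (Finset.mem_sdiff.1 hu).2
    have : z u = y u := by simp [hz, Pi.single_eq_of_ne hut]
    rw [this]
  rw [hprod]
  have ht : z t = y t + 1 := by simp [hz]
  rw [ht, Nat.factorial_succ, pow_succ]
  have h1 : ((y t : ℝ) + 1) ≠ 0 := by positivity
  have h2 : (Nat.factorial (y t) : ℝ) ≠ 0 := Nat.cast_ne_zero.2 (Nat.factorial_ne_zero _)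
  push_cast
  field_simp

end VirusAux

namespace VirusAux2
open VirusAux

lemma slice {T : ℕ} (lam : ℝ) (r : Fin T → ℝ)
    (A : Finset (Fin T → ℕ)) (t : Fin T)
    (hdc : ∀ y : Fin T → ℕ, y + Pi.single t 1 ∈ A → y ∈ A) (p : ℝ) :
    ∑ x ∈ A, (x t : ℝ) * (cc lam r x * p ^ (nn x - 1))
      = lam * r t * ∑ y ∈ A.filter (fun y => y + Pi.single t 1 ∈ A),
          cc lam r y * p ^ (nn y) := by
  classical
  rw [Finset.mul_sum]
  rw [← Finset.sum_filter_of_ne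
      (p := fun x : Fin T → ℕ => x t ≠ 0)
      (f := fun x : Fin T → ℕ => (x t : ℝ) * (cc lam r x * p ^ (nn x - 1)))
      (fun x _ hfx => by
        intro h0
        exact hfx (by simp [h0]))]
  refine Finset.sum_nbij' (fun x => x - Pi.single t 1) (fun y => y + Pi.single t 1)
    ?_ ?_ ?_ ?_ ?_
  · intro x hx
    obtain ⟨hxA, hxt⟩ := Finset.mem_filter.1 hx
    have hrec : (x - Pi.single t 1) + Pi.single t 1 = x := by
      funext u
      by_cases hu : u = t
      · subst hu
        simp [Nat.sub_add_cancel (Nat.one_le_iff_ne_zero.2 hxt)]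
      · simp [Pi.single_eq_of_ne hu]
    rw [Finset.mem_filter, hrec]
    exact ⟨hdc _ (by rw [hrec]; exact hxA), hxA⟩
  · intro y hy
    obtain ⟨hyA, hyt⟩ := Finset.mem_filter.1 hy
    rw [Finset.mem_filter]
    refine ⟨hyt, ?_⟩
    simp
  · intro x hx
    obtain ⟨hxA, hxt⟩ := Finset.mem_filter.1 hx
    funext u
    by_cases hu : u = t
    · subst hu
      simp [Nat.sub_add_cancel (Nat.one_le_iff_ne_zero.2 hxt)]
    · simp [Pi.single_eq_of_ne hu]
  · intro y hy
    funext u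
    by_cases hu : u = t
    · subst hu; simp
    · simp [Pi.single_eq_of_ne hu]
  · intro x hx
    obtain ⟨hxA, hxt⟩ := Finset.mem_filter.1 hx
    have hrec : (x - Pi.single t 1) + Pi.single t 1 = x := by
      funext u
      by_cases hu : u = t
      · subst hu
        simp [Nat.sub_add_cancel (Nat.one_le_iff_ne_zero.2 hxt)]
      · simp [Pi.single_eq_of_ne hu]
    show (x t : ℝ) * (cc lam r x * p ^ (nn x - 1))
        = lam * r t * (cc lam r (x - Pi.single t 1) * p ^ nn (x - Pi.single t 1))
    rw [← hrec]
    have hxt' : (((x - Pi.single t 1 + Pi.single t 1 : Fin T → ℕ)) t : ℝ)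
        = (((x - Pi.single t 1 : Fin T → ℕ)) t : ℝ) + 1 := by simp
    have hnx : nn (x - Pi.single t 1 + Pi.single t 1 : Fin T → ℕ) - 1
        = nn (x - Pi.single t 1 : Fin T → ℕ) := by
      rw [nn_add_single]; omega
    rw [hxt', hnx, ← mul_assoc, cc_add_single]
    rw [hrec]
    ring

lemma key {T : ℕ} (hT : 1 ≤ T) (lam : ℝ) (hlam : 0 < lam)
    (r : Fin T → ℝ) (hr : ∀ t, 0 < r t) (hrsum : ∑ t, r t = 1)
    (A : Finset (Fin T → ℕ))
    (hdc : ∀ (y : Fin T → ℕ) (t : Fin T), y + Pi.single t 1 ∈ A → y ∈ A)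
    (h0 : (0 : Fin T → ℕ) ∈ A) (p : ℝ) (hp : 0 < p) :
    ∑ x ∈ A, cc lam r x * ((nn x : ℝ) * p ^ (nn x - 1))
      < lam * ∑ x ∈ A, cc lam r x * p ^ (nn x) := by
  classical
  -- rewrite LHS as double sum
  have hL : ∑ x ∈ A, cc lam r x * ((nn x : ℝ) * p ^ (nn x - 1))
      = ∑ t, ∑ x ∈ A, (x t : ℝ) * (cc lam r x * p ^ (nn x - 1)) := by
    rw [Finset.sum_comm]
    apply Finset.sum_congr rfl
    intro x _
    have : ((nn x : ℝ)) = ∑ t, (x t : ℝ) := by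
      simp [nn]
    rw [this, Finset.sum_mul]
    rw [Finset.mul_sum]
    apply Finset.sum_congr rfl
    intro t _
    ring
  have hR : lam * ∑ x ∈ A, cc lam r x * p ^ (nn x)
      = ∑ t, lam * r t * ∑ x ∈ A, cc lam r x * p ^ (nn x) := by
    rw [← Finset.sum_mul,
      show (∑ t : Fin T, lam * r t) = lam * ∑ t, r t from (Finset.mul_sum _ _ _).symm,
      hrsum, mul_one]
  rw [hL, hR]
  -- maximal element
  obtain ⟨xm, hxmA, hxmax⟩ := A.exists_max_image nn ⟨0, h0⟩
  have hnotin : ∀ t : Fin T, xm + Pi.single t 1 ∉ A := by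
    intro t hmem
    have h1 := hxmax _ hmem
    rw [nn_add_single] at h1
    omega
  have hterm_pos : ∀ x : Fin T → ℕ, 0 < cc lam r x * p ^ (nn x) :=
    fun x => mul_pos (cc_pos hlam hr x) (pow_pos hp _)
  apply Finset.sum_lt_sum
  · intro t _
    rw [slice lam r A t (fun y => hdc y t) p]
    apply mul_le_mul_of_nonneg_left _ (le_of_lt (mul_pos hlam (hr t)))
    apply Finset.sum_le_sum_of_subset_of_nonneg (Finset.filter_subset _ _)
    intro x hx _
    exact le_of_lt (hterm_pos x)
  · refine ⟨⟨0, hT⟩, Finset.mem_univ _, ?_⟩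
    set t : Fin T := ⟨0, hT⟩
    rw [slice lam r A t (fun y => hdc y t) p]
    apply mul_lt_mul_of_pos_left _ (mul_pos hlam (hr t))
    apply Finset.sum_lt_sum_of_subset (Finset.filter_subset _ _) hxmA
    · intro hmem
      exact hnotin t (Finset.mem_filter.1 hmem).2
    · exact hterm_pos xm
    · intro x hx _
      exact le_of_lt (hterm_pos x)

end VirusAux2


open VirusAux VirusAux2



/-- If `0 < C₁ < C₂ < K` and `F(1) < (1 − C₂/K) * exp λ`, and
`p₁, p₂ ∈ (0,1)` are the (unique) solutions of `F(p) = (1 − C₁/K) * exp (λ p)`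
and `F(p) = (1 − C₂/K) * exp (λ p)` respectively, then `p₁ < p₂`: the
equilibrium probability of not protecting is strictly increasing in the
protection cost `C`. -/
theorem equilibrium_increasing_in_cost (T : ℕ) (hT : 1 ≤ T)
    (lam : ℝ) (hlam : 0 < lam)
    (r : Fin T → ℝ) (hr : ∀ t, 0 < r t) (hrsum : ∑ t, r t = 1)
    (τ : Fin T → ℝ) (hτ : ∀ t, 0 < τ t)
    (K C₁ C₂ : ℝ) (hK : 0 < K) (hC₁ : 0 < C₁) (hC₁₂ : C₁ < C₂) (hC₂K : C₂ < K)
    (S : Set (Fin T → ℕ))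
    (hSdef : S = {x : Fin T → ℕ | ∑ t, (x t : ℝ) * τ t / (1 + τ t) < 1})
    (hSfin : S.Finite)
    (F : ℝ → ℝ)
    (hF : ∀ p : ℝ, F p =
      ∑ x ∈ hSfin.toFinset, ∏ t, (lam * r t * p) ^ (x t) / (Nat.factorial (x t) : ℝ))
    (hcond : F 1 < (1 - C₂ / K) * Real.exp lam)
    (p₁ p₂ : ℝ)
    (hp₁ : p₁ ∈ Set.Ioo (0 : ℝ) 1) (hp₁eq : F p₁ = (1 - C₁ / K) * Real.exp (lam * p₁))
    (hp₂ : p₂ ∈ Set.Ioo (0 : ℝ) 1) (hp₂eq : F p₂ = (1 - C₂ / K) * Real.exp (lam * p₂)) :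
    p₁ < p₂ := by
  classical
  set A : Finset (Fin T → ℕ) := hSfin.toFinset with hA
  have hmemA : ∀ x : Fin T → ℕ, x ∈ A ↔ ∑ t, (x t : ℝ) * τ t / (1 + τ t) < 1 := by
    intro x
    rw [hA, Set.Finite.mem_toFinset, hSdef]
    rfl
  have h0A : (0 : Fin T → ℕ) ∈ A := by
    rw [hmemA]
    simp
  have hdc : ∀ (y : Fin T → ℕ) (t : Fin T), y + Pi.single t 1 ∈ A → y ∈ A := by
    intro y t h
    rw [hmemA] at h ⊢
    refine lt_of_le_of_lt (Finset.sum_le_sum fun u _ => ?_) h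
    have h1 : (0:ℝ) < 1 + τ u := by linarith [hτ u]
    have h2 : (y u : ℝ) ≤ (((y + Pi.single t 1) : Fin T → ℕ) u : ℝ) := by
      exact_mod_cast Nat.le_add_right _ _
    exact (div_le_div_iff_of_pos_right h1).2 (mul_le_mul_of_nonneg_right h2 (le_of_lt (hτ u)))
  -- rewrite F
  have hFfun : ∀ p : ℝ, F p = ∑ x ∈ A, cc lam r x * p ^ (nn x) := by
    intro p
    rw [hF]
    apply Finset.sum_congr rfl
    intro x _
    rw [cc, nn, ← Finset.prod_pow_eq_pow_sum, ← Finset.prod_mul_distrib]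
    apply Finset.prod_congr rfl
    intro t _
    rw [mul_pow]
    ring
  set G : ℝ → ℝ := fun q => (∑ x ∈ A, cc lam r x * q ^ (nn x)) * Real.exp (-(lam * q))
    with hG
  have hGder : ∀ q : ℝ, HasDerivAt G
      ((∑ x ∈ A, cc lam r x * ((nn x : ℝ) * q ^ (nn x - 1))) * Real.exp (-(lam * q))
        + (∑ x ∈ A, cc lam r x * q ^ (nn x)) * (Real.exp (-(lam * q)) * -(lam * 1))) q := by
    intro q
    exact (HasDerivAt.fun_sum fun x _ =>
      ((hasDerivAt_pow (nn x) q).const_mul (cc lam r x))).mul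
      (((hasDerivAt_id q).const_mul lam).neg.exp)
  have hGanti : StrictAntiOn G (Set.Icc (0:ℝ) 1) := by
    apply strictAntiOn_of_deriv_neg (convex_Icc 0 1)
    · exact fun q _ => ((hGder q).continuousAt).continuousWithinAt
    · intro q hq
      rw [interior_Icc] at hq
      rw [(hGder q).deriv]
      have hkey := key hT lam hlam r hr hrsum A hdc h0A q hq.1
      have hE : 0 < Real.exp (-(lam * q)) := Real.exp_pos _
      nlinarith [hkey, hE]
  have hexp : ∀ q : ℝ, Real.exp (lam * q) * Real.exp (-(lam * q)) = 1 := by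
    intro q
    rw [← Real.exp_add, add_neg_cancel, Real.exp_zero]
  have hG1 : G p₁ = 1 - C₁ / K := by
    rw [hG]
    simp only
    rw [← hFfun, hp₁eq, mul_assoc, hexp, mul_one]
  have hG2 : G p₂ = 1 - C₂ / K := by
    rw [hG]
    simp only
    rw [← hFfun, hp₂eq, mul_assoc, hexp, mul_one]
  have hvals : G p₂ < G p₁ := by
    rw [hG1, hG2]
    have : C₁ / K < C₂ / K := (div_lt_div_iff_of_pos_right hK).2 hC₁₂
    linarith
  have hm₁ : p₁ ∈ Set.Icc (0:ℝ) 1 := ⟨le_of_lt hp₁.1, le_of_lt hp₁.2⟩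
  have hm₂ : p₂ ∈ Set.Icc (0:ℝ) 1 := ⟨le_of_lt hp₂.1, le_of_lt hp₂.2⟩
  by_contra hcon
  push_neg at hcon
  rcases lt_or_eq_of_le hcon with h | h
  · have := hGanti hm₂ hm₁ h
    linarith
  · rw [h] at hvals
    exact lt_irrefl _ hvals
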